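/- arXiv:1109.0452 — 2 statements merged into one kernel-verified Lean document; each statement's English description precedes it below -/
import Mathlib

section
/- For every ξ₀ ∈ ℝⁿ there exists a multi-index α with 2 ≤ |α| ≤ m such that the partial derivative ∂^α(P^{1/2})(ξ₀) is nonzero. Equivalently, the hypersurface {(ξ, z) ∈ ℝⁿ×ℝ : z = P(ξ)^{1/2}} has type at most m at every point. -/
open MeasureTheory Real Filter Topology
open scoped RealInnerProductSpace

noncomputable section

/-- Evaluation of a multivariate polynomial at a point of Euclidean space. -/
def polyEval {n : ℕ} (p : MvPolynomial (Fin n) ℝ) (ξ : EuclideanSpace ℝ (Fin n)) : ℝ :=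
  MvPolynomial.eval (fun i => ξ i) p


lemma contDiff_polyEval {n : ℕ} (p : MvPolynomial (Fin n) ℝ) :
    ContDiff ℝ (⊤ : ℕ∞) (polyEval p) := by
  unfold polyEval
  induction p using MvPolynomial.induction_on with
  | C a => simpa using contDiff_const
  | add p q hp hq => simpa [MvPolynomial.eval_add] using hp.add hq
  | mul_X p i hp =>
    simp only [MvPolynomial.eval_mul, MvPolynomial.eval_X]
    exact hp.mul (EuclideanSpace.proj (𝕜 := ℝ) i).contDiff

lemma iteratedFDeriv_shift {E F : Type*} [NormedAddCommGroup E] [NormedSpace ℝ E]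
    [NormedAddCommGroup F] [NormedSpace ℝ F]
    (f : E → F) (hf : ContDiff ℝ (⊤ : ℕ∞) f) (a : E) (k : ℕ) (x : E) :
    iteratedFDeriv ℝ k (fun y => f (a + y)) x = iteratedFDeriv ℝ k f (a + x) := by
  induction k generalizing x with
  | zero => ext m; simp
  | succ k IH =>
    ext m
    rw [iteratedFDeriv_succ_apply_left, iteratedFDeriv_succ_apply_left]
    have h1 : iteratedFDeriv ℝ k (fun y => f (a + y)) =
        fun y => iteratedFDeriv ℝ k f (a + y) := funext fun y => IH y
    rw [h1]
    have hf' : ContDiff ℝ ((k+1 : ℕ) : WithTop ℕ∞) f := hf.of_le (by exact_mod_cast le_top)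
    have hd : DifferentiableAt ℝ (iteratedFDeriv ℝ k f) (a + x) :=
      (hf'.differentiable_iteratedFDeriv (by exact_mod_cast Nat.lt_succ_self k)).differentiableAt
    have h2 : HasFDerivAt (fun y : E => a + y) (ContinuousLinearMap.id ℝ E) x := by
      simpa using (hasFDerivAt_id x).const_add a
    have h3 := (hd.hasFDerivAt.comp x h2).fderiv
    rw [show (fun y => iteratedFDeriv ℝ k f (a + y)) =
      (iteratedFDeriv ℝ k f) ∘ (fun y => a + y) from rfl, h3]
    simp

lemma iteratedDeriv_line {E : Type*} [NormedAddCommGroup E] [NormedSpace ℝ E]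
    (g : E → ℝ) (hg : ContDiff ℝ (⊤ : ℕ∞) g) (ξ₀ w : E) (k : ℕ) :
    iteratedDeriv k (fun t : ℝ => g (ξ₀ + t • w)) 0
      = iteratedFDeriv ℝ k g ξ₀ (fun _ => w) := by
  have hA : (fun t : ℝ => g (ξ₀ + t • w)) =
      (fun y => g (ξ₀ + y)) ∘ (ContinuousLinearMap.toSpanSingleton ℝ w) := by
    funext t; simp [ContinuousLinearMap.toSpanSingleton_apply]
  have hgs : ContDiff ℝ (⊤ : ℕ∞) (fun y => g (ξ₀ + y)) :=
    hg.comp (contDiff_const.add contDiff_id)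
  rw [iteratedDeriv_eq_iteratedFDeriv, hA,
    (ContinuousLinearMap.toSpanSingleton ℝ w).iteratedFDeriv_comp_right hgs 0 (by exact_mod_cast le_top)]
  rw [ContinuousMultilinearMap.compContinuousLinearMap_apply]
  rw [show (ContinuousLinearMap.toSpanSingleton ℝ w) (0:ℝ) = 0 by simp]
  rw [iteratedFDeriv_shift g hg ξ₀ k 0]
  simp [ContinuousLinearMap.toSpanSingleton_apply]

lemma iteratedDeriv_add' {u v : ℝ → ℝ} (hu : ContDiff ℝ (⊤ : ℕ∞) u)
    (hv : ContDiff ℝ (⊤ : ℕ∞) v) (k : ℕ) (x : ℝ) :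
    iteratedDeriv k (fun t => u t + v t) x = iteratedDeriv k u x + iteratedDeriv k v x := by
  rw [← iteratedDerivWithin_univ, ← iteratedDerivWithin_univ, ← iteratedDerivWithin_univ]
  exact iteratedDerivWithin_add (Set.mem_univ x) uniqueDiffOn_univ
    (hu.of_le (by exact_mod_cast le_top)).contDiffWithinAt
    (hv.of_le (by exact_mod_cast le_top)).contDiffWithinAt

lemma iteratedDeriv_sub' {u v : ℝ → ℝ} (hu : ContDiff ℝ (⊤ : ℕ∞) u)
    (hv : ContDiff ℝ (⊤ : ℕ∞) v) (k : ℕ) (x : ℝ) :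
    iteratedDeriv k (fun t => u t - v t) x = iteratedDeriv k u x - iteratedDeriv k v x := by
  rw [← iteratedDerivWithin_univ, ← iteratedDerivWithin_univ, ← iteratedDerivWithin_univ]
  exact iteratedDerivWithin_sub (Set.mem_univ x) uniqueDiffOn_univ
    (hu.of_le (by exact_mod_cast le_top)).contDiffWithinAt
    (hv.of_le (by exact_mod_cast le_top)).contDiffWithinAt

lemma flat_mul : ∀ (M : ℕ) (u v : ℝ → ℝ), ContDiff ℝ (⊤ : ℕ∞) u → ContDiff ℝ (⊤ : ℕ∞) v →
    (∀ j ≤ M, iteratedDeriv j u 0 = 0) →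
    ∀ j ≤ M, iteratedDeriv j (fun t => u t * v t) 0 = 0 := by
  intro M
  induction M with
  | zero =>
    intro u v hu hv h j hj
    interval_cases j
    have h0 := h 0 le_rfl
    simp only [iteratedDeriv_zero] at h0 ⊢
    simp [h0]
  | succ M IH =>
    intro u v hu hv h j hj
    match j with
    | 0 =>
      have h0 := h 0 (by omega)
      simp only [iteratedDeriv_zero] at h0 ⊢
      simp [h0]
    | j+1 =>
      have hj' : j ≤ M := by omega
      rw [iteratedDeriv_succ']
      have hud : Differentiable ℝ u := hu.differentiable (by simp)
      have hvd : Differentiable ℝ v := hv.differentiable (by simp)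
      have hder : deriv (fun t => u t * v t) =
          fun t => deriv u t * v t + u t * deriv v t := by
        funext t
        exact deriv_mul (hud t) (hvd t)
      rw [hder]
      have hu' : ContDiff ℝ (⊤ : ℕ∞) (deriv u) := (contDiff_infty_iff_deriv.mp hu).2
      have hv' : ContDiff ℝ (⊤ : ℕ∞) (deriv v) := (contDiff_infty_iff_deriv.mp hv).2
      rw [iteratedDeriv_add' (hu'.mul hv) (hu.mul hv') j 0]
      have e1 : iteratedDeriv j (fun t => deriv u t * v t) 0 = 0 := by
        refine IH (deriv u) v hu' hv ?_ j hj'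
        intro i hi
        rw [← iteratedDeriv_succ']
        exact h (i+1) (by omega)
      have e2 : iteratedDeriv j (fun t => u t * deriv v t) 0 = 0 :=
        IH u (deriv v) hu hv' (fun i hi => h i (by omega)) j hj'
      rw [e1, e2, add_zero]

lemma iteratedDeriv_polyEval (q : Polynomial ℝ) (k : ℕ) (x : ℝ) :
    iteratedDeriv k (fun t => q.eval t) x = (Polynomial.derivative^[k] q).eval x := by
  induction k generalizing q with
  | zero => simp
  | succ k ih =>
    rw [iteratedDeriv_succ']
    have : deriv (fun t => q.eval t) = fun t => (Polynomial.derivative q).eval t :=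
      funext fun t => Polynomial.deriv q
    rw [this, ih, Function.iterate_succ_apply]

lemma poly_eq_zero_of_flat (q : Polynomial ℝ) (m : ℕ) (hdeg : q.natDegree ≤ m)
    (h : ∀ j ≤ m, iteratedDeriv j (fun t => q.eval t) 0 = 0) : q = 0 := by
  ext k
  rcases le_or_gt k m with hk | hk
  · have hh := h k hk
    rw [iteratedDeriv_polyEval, ← Polynomial.coeff_zero_eq_eval_zero,
      Polynomial.coeff_iterate_derivative] at hh
    have : ((0 + k).descFactorial k : ℝ) * q.coeff (0 + k) = 0 := by
      simpa [nsmul_eq_mul] using hh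
    rcases mul_eq_zero.mp this with h1 | h2
    · exfalso
      have hdf : (0 + k).descFactorial k = Nat.factorial k := by
        simp [Nat.descFactorial_self]
      rw [hdf] at h1
      exact (Nat.cast_ne_zero.mpr (Nat.factorial_ne_zero k)) h1
    · rw [Polynomial.coeff_zero]
      simpa using h2
  · rw [Polynomial.coeff_zero]
    exact Polynomial.coeff_eq_zero_of_natDegree_lt (lt_of_le_of_lt hdeg hk)

lemma eval_aeval' {n : ℕ} (p : MvPolynomial (Fin n) ℝ) (f : Fin n → Polynomial ℝ) (t : ℝ) :
    (MvPolynomial.aeval f p).eval t = MvPolynomial.eval (fun i => (f i).eval t) p := by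
  induction p using MvPolynomial.induction_on with
  | C a => simp [MvPolynomial.algebraMap_eq]
  | add p q hp hq => simp [hp, hq]
  | mul_X p i hp => simp [hp]

lemma natDegree_aeval_le' {n : ℕ} (p : MvPolynomial (Fin n) ℝ) (f : Fin n → Polynomial ℝ)
    (hf : ∀ i, (f i).natDegree ≤ 1) :
    (MvPolynomial.aeval f p).natDegree ≤ p.totalDegree := by
  rw [MvPolynomial.aeval_def, MvPolynomial.eval₂_eq]
  refine (Polynomial.natDegree_sum_le _ _).trans ?_
  rw [Finset.fold_max_le]
  constructor
  · exact Nat.zero_le _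
  intro d hd
  refine le_trans ?_ (MvPolynomial.le_totalDegree hd)
  calc (fun q => Polynomial.natDegree q)
        (algebraMap ℝ (Polynomial ℝ) (MvPolynomial.coeff d p) * ∏ i ∈ d.support, f i ^ d i)
      ≤ (algebraMap ℝ (Polynomial ℝ) (MvPolynomial.coeff d p)).natDegree
        + (∏ i ∈ d.support, f i ^ d i).natDegree := Polynomial.natDegree_mul_le
    _ ≤ 0 + (∏ i ∈ d.support, f i ^ d i).natDegree := by
        simp [MvPolynomial.algebraMap_eq]
    _ ≤ ∑ i ∈ d.support, ((f i) ^ (d i)).natDegree := by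
        simpa using Polynomial.natDegree_prod_le d.support (fun i => f i ^ d i)
    _ ≤ ∑ i ∈ d.support, d i * 1 := by
        refine Finset.sum_le_sum fun i _ => ?_
        exact (Polynomial.natDegree_pow_le).trans (Nat.mul_le_mul_left _ (hf i))
    _ = d.sum fun _ e => e := by
        simp [Finsupp.sum]

/-- Lemma 5.1: if `P` is a polynomial of degree exactly `m ≥ 4` with `P > 0`, then at
every point `ξ₀` some partial derivative `∂^α (P^{1/2})(ξ₀)` with `2 ≤ |α| ≤ m` is
nonzero; i.e. the hypersurface `{z = P(ξ)^{1/2}}` has type at most `m` everywhere. -/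
theorem sqrt_poly_type_le (n m : ℕ) (hn : 1 ≤ n) (hm4 : 4 ≤ m)
    (p : MvPolynomial (Fin n) ℝ) (hdeg : p.totalDegree = m)
    (hpos : ∀ ξ : EuclideanSpace ℝ (Fin n), 0 < polyEval p ξ) :
    ∀ ξ₀ : EuclideanSpace ℝ (Fin n), ∃ k : ℕ, 2 ≤ k ∧ k ≤ m ∧
      ∃ v : Fin k → Fin n,
        iteratedFDeriv ℝ k (fun ξ => Real.sqrt (polyEval p ξ)) ξ₀
          (fun j => EuclideanSpace.single (v j) 1) ≠ 0 := by
  classical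
  intro ξ₀
  by_contra hcon
  push_neg at hcon
  set g : EuclideanSpace ℝ (Fin n) → ℝ := fun ξ => Real.sqrt (polyEval p ξ) with hgdef
  have hgsm : ContDiff ℝ (⊤ : ℕ∞) g := by
    rw [contDiff_iff_contDiffAt]
    intro ξ
    exact (Real.contDiffAt_sqrt (ne_of_gt (hpos ξ))).comp ξ (contDiff_polyEval p).contDiffAt
  have hflat : ∀ k, 2 ≤ k → k ≤ m → iteratedFDeriv ℝ k g ξ₀ = 0 := by
    intro k h2 hk
    apply ContinuousMultilinearMap.toMultilinearMap_injective
    refine Module.Basis.ext_multilinear (fun _ => (EuclideanSpace.basisFun (Fin n) ℝ).toBasis) fun v => ?_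
    have hv := hcon k h2 hk v
    simpa [OrthonormalBasis.coe_toBasis, EuclideanSpace.basisFun_apply] using hv
  set c : ℝ := g ξ₀ with hc
  set L := fderiv ℝ g ξ₀ with hL
  have key : ∀ w : EuclideanSpace ℝ (Fin n), polyEval p (ξ₀ + w) = (c + L w)^2 := by
    intro w
    set φ : ℝ → ℝ := fun t => g (ξ₀ + t • w) with hφ
    have hφsm : ContDiff ℝ (⊤ : ℕ∞) φ :=
      hgsm.comp (contDiff_const.add (contDiff_id.smul contDiff_const))
    have hline := fun k => iteratedDeriv_line g hgsm ξ₀ w k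
    set b : ℝ := L w with hb
    set Ψ : Polynomial ℝ := Polynomial.C c + Polynomial.C b * Polynomial.X with hΨ
    have hΨeval : ∀ t, Ψ.eval t = c + b * t := by intro t; simp [hΨ]
    have hψsm : ContDiff ℝ (⊤ : ℕ∞) (fun t : ℝ => Ψ.eval t) := by
      have hfe : (fun t : ℝ => Ψ.eval t) = fun t => c + b * t := funext hΨeval
      rw [hfe]
      exact contDiff_const.add (contDiff_const.mul contDiff_id)
    have hu_flat : ∀ j ≤ m, iteratedDeriv j (fun t => φ t - Ψ.eval t) 0 = 0 := by
      intro j hj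
      rw [iteratedDeriv_sub' hφsm hψsm, iteratedDeriv_polyEval]
      match j, hj with
      | 0, hj => simp [hφ, hΨ, hc]
      | 1, hj =>
        rw [hline 1, iteratedFDeriv_one_apply]
        simp [hΨ, hb, hL]
      | (j+2), hj =>
        rw [hline (j+2), hflat (j+2) (by omega) (by omega)]
        have e2 : Polynomial.derivative^[2] Ψ = 0 := by
          simp [Function.iterate_succ_apply, hΨ]
        have h2 : Polynomial.derivative^[j+2] Ψ = 0 := by
          rw [Function.iterate_add_apply, e2, Polynomial.iterate_derivative_zero]
        rw [h2]
        simp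
    set f : Fin n → Polynomial ℝ :=
      fun i => Polynomial.C (ξ₀ i) + Polynomial.C (w i) * Polynomial.X with hf
    have hfdeg : ∀ i, (f i).natDegree ≤ 1 := by
      intro i
      refine (Polynomial.natDegree_add_le _ _).trans (max_le (by simp) ?_)
      exact Polynomial.natDegree_mul_le.trans (by simp)
    set r : Polynomial ℝ := MvPolynomial.aeval f p with hr
    have hreval : ∀ t, r.eval t = polyEval p (ξ₀ + t • w) := by
      intro t
      rw [hr, eval_aeval']
      unfold polyEval
      have he : (fun i => Polynomial.eval t (f i)) = fun i => (ξ₀ + t • w) i := by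
        funext i
        simp only [hf, Polynomial.eval_add, Polynomial.eval_mul, Polynomial.eval_C,
          Polynomial.eval_X, PiLp.add_apply, PiLp.smul_apply, smul_eq_mul]
        ring
      rw [he]
    have hφsq : ∀ t, φ t ^ 2 = r.eval t := by
      intro t
      rw [hreval]
      simp only [hφ, hgdef]
      exact Real.sq_sqrt (hpos _).le
    set R : Polynomial ℝ := r - Ψ ^ 2 with hR
    have hReval : ∀ t, R.eval t = (φ t - Ψ.eval t) * (φ t + Ψ.eval t) := by
      intro t
      rw [hR]
      simp only [Polynomial.eval_sub, Polynomial.eval_pow]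
      rw [← hφsq t]
      ring
    have hrdeg : r.natDegree ≤ m := (natDegree_aeval_le' p f hfdeg).trans (by rw [hdeg])
    have hΨdeg : (Ψ ^ 2).natDegree ≤ 2 := by
      refine Polynomial.natDegree_pow_le.trans ?_
      have : Ψ.natDegree ≤ 1 := by
        refine (Polynomial.natDegree_add_le _ _).trans (max_le (by simp) ?_)
        exact Polynomial.natDegree_mul_le.trans (by simp)
      omega
    have hRdeg : R.natDegree ≤ m :=
      (Polynomial.natDegree_sub_le _ _).trans (max_le hrdeg (by omega))
    have hRflat : ∀ j ≤ m, iteratedDeriv j (fun t => R.eval t) 0 = 0 := by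
      have hfun : (fun t => R.eval t) = fun t => (φ t - Ψ.eval t) * (φ t + Ψ.eval t) :=
        funext hReval
      rw [hfun]
      exact flat_mul m _ _ (hφsm.sub hψsm) (hφsm.add hψsm) hu_flat
    have hR0 : R = 0 := poly_eq_zero_of_flat R m hRdeg hRflat
    have hrΨ : r = Ψ ^ 2 := by
      have := sub_eq_zero.mp (hR ▸ hR0)
      exact this
    have := hreval 1
    rw [hrΨ] at this
    rw [one_smul] at this
    rw [← this]
    simp [hΨeval]
  set Lc : Fin n → ℝ := fun i => L (EuclideanSpace.single i 1) with hLc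
  set Q : MvPolynomial (Fin n) ℝ :=
    (MvPolynomial.C c +
      ∑ i, MvPolynomial.C (Lc i) * (MvPolynomial.X i - MvPolynomial.C (ξ₀ i))) ^ 2 with hQ
  have hpQ : p = Q := by
    apply MvPolynomial.funext
    intro x
    set w : EuclideanSpace ℝ (Fin n) :=
      (EuclideanSpace.equiv (Fin n) ℝ).symm (fun i => x i - ξ₀ i) with hw
    have hwi : ∀ i, w i = x i - ξ₀ i := fun i => rfl
    have h1 : MvPolynomial.eval x p = polyEval p (ξ₀ + w) := by
      unfold polyEval
      have he : (fun i => (ξ₀ + w) i) = x := by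
        funext i
        simp [PiLp.add_apply, hwi i]
      rw [he]
    have hwsum := ((EuclideanSpace.basisFun (Fin n) ℝ).sum_repr w).symm
    simp only [EuclideanSpace.basisFun_repr, EuclideanSpace.basisFun_apply] at hwsum
    have hLw : L w = ∑ i, Lc i * (x i - ξ₀ i) := by
      conv_lhs => rw [hwsum]
      rw [map_sum]
      refine Finset.sum_congr rfl fun i _ => ?_
      rw [_root_.map_smul]
      simp [hwi i, hLc, smul_eq_mul, mul_comm]
    rw [h1, key w, hLw, hQ]
    simp [map_pow, map_add, map_sub, map_mul, MvPolynomial.eval_C, MvPolynomial.eval_X,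
      map_sum]
  have hQdeg : Q.totalDegree ≤ 2 := by
    rw [hQ]
    refine (MvPolynomial.totalDegree_pow _ _).trans ?_
    have hin : (MvPolynomial.C c +
        ∑ i, MvPolynomial.C (Lc i) * (MvPolynomial.X i - MvPolynomial.C (ξ₀ i)) :
        MvPolynomial (Fin n) ℝ).totalDegree ≤ 1 := by
      refine (MvPolynomial.totalDegree_add _ _).trans (max_le (by simp) ?_)
      refine (MvPolynomial.totalDegree_finset_sum _ _).trans ?_
      refine Finset.sup_le fun i _ => ?_
      refine (MvPolynomial.totalDegree_mul _ _).trans ?_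
      have hX : (MvPolynomial.X i - MvPolynomial.C (ξ₀ i) :
          MvPolynomial (Fin n) ℝ).totalDegree ≤ 1 := by
        rw [sub_eq_add_neg, ← map_neg]
        refine (MvPolynomial.totalDegree_add _ _).trans (max_le ?_ (by simp))
        simp [MvPolynomial.totalDegree_X]
      simpa [MvPolynomial.totalDegree_C] using hX
    omega
  rw [hpQ] at hdeg
  omega
end
end

section
/- The function a(ξ) := √(P(ξ)) − √(P_m(ξ)), defined on ℝⁿ \ {0}, is a symbol of order m/2 − 1 at infinity: for every multi-index α there exist a constant C_α > 0 and R ≥ 1 such that |∂^α a(ξ)| ≤ C_α·|ξ|^{m/2 − 1 − |α|} for all ξ with |ξ| ≥ R. -/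
open MeasureTheory Real Filter Topology
open scoped RealInnerProductSpace

noncomputable section

namespace SqrtAux
open Set

variable {n : ℕ}

abbrev E (n : ℕ) := EuclideanSpace ℝ (Fin n)

lemma contDiff_polyEval (q : MvPolynomial (Fin n) ℝ) :
    ContDiff ℝ (⊤ : ℕ∞) (fun ξ : E n => polyEval q ξ) := by
  induction q using MvPolynomial.induction_on with
  | C a => simpa [polyEval] using contDiff_const (c := a)
  | add p q hp hq =>
      have : (fun ξ : E n => polyEval (p + q) ξ)
          = fun ξ => polyEval p ξ + polyEval q ξ := by
        funext ξ; simp [polyEval]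
      rw [this]; exact hp.add hq
  | mul_X q i hq =>
      have : (fun ξ : E n => polyEval (q * MvPolynomial.X i) ξ)
          = fun ξ => polyEval q ξ * (EuclideanSpace.proj (𝕜 := ℝ) i) ξ := by
        funext ξ; simp [polyEval]
      rw [this]; exact hq.mul (EuclideanSpace.proj (𝕜 := ℝ) i).contDiff

lemma eval_smul_homog {q : MvPolynomial (Fin n) ℝ} {j : ℕ} (hq : q.IsHomogeneous j)
    (c : ℝ) (ξ : E n) : polyEval q (c • ξ) = c ^ j * polyEval q ξ := by
  have hco : (fun i => (c • ξ) i) = fun i => c * ξ i := by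
    funext i; simp [PiLp.smul_apply, smul_eq_mul]
  rw [polyEval, polyEval, hco, MvPolynomial.eval_eq', MvPolynomial.eval_eq', Finset.mul_sum]
  refine Finset.sum_congr rfl fun d hd => ?_
  have hdeg : ∑ i : Fin n, d i = j := by
    have h1 : Finsupp.degree d = j := by
      have := hq (MvPolynomial.mem_support_iff.mp hd)
      rw [Finsupp.degree_eq_weight_one]; exact this
    rw [← h1, Finsupp.degree]
    exact (Finset.sum_subset (Finset.subset_univ _)
      (fun i _ hi => Finsupp.notMem_support_iff.mp hi)).symm
  have : ∏ i : Fin n, (c * ξ i) ^ d i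
      = c ^ j * ∏ i : Fin n, ξ i ^ d i := by
    rw [← hdeg, ← Finset.prod_pow_eq_pow_sum, ← Finset.prod_mul_distrib]
    exact Finset.prod_congr rfl fun i _ => (mul_pow _ _ _)
  rw [this]; ring


variable {X : Type*} [NormedAddCommGroup X] [NormedSpace ℝ X]


/-- The set of nonzero vectors. -/
def O (n : ℕ) : Set (E n) := {y | y ≠ 0}

lemma isOpen_O : IsOpen (O n) := isOpen_compl_singleton

/-- scaling as a continuous linear equiv -/
def scl (c : ℝ) (hc : c ≠ 0) : E n ≃L[ℝ] E n :=
  (LinearEquiv.smulOfNeZero ℝ (E n) c hc).toContinuousLinearEquiv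

lemma scl_apply (c : ℝ) (hc : c ≠ 0) (y : E n) : scl c hc y = c • y := rfl

/-- Derivative bounds for positively homogeneous functions. -/
lemma homog_bound (f : E n → X) (hf : ContDiffOn ℝ (⊤ : ℕ∞) f (O n))
    (d : ℝ) (hd : ∀ c : ℝ, 0 < c → ∀ y : E n, f (c • y) = (c ^ d) • f y) (i : ℕ) :
    ∃ B : ℝ, 0 < B ∧ ∀ ξ : E n, 1 ≤ ‖ξ‖ →
      ‖iteratedFDeriv ℝ i f ξ‖ ≤ B * ‖ξ‖ ^ (d - i) := by
  have hO : IsOpen (O n) := isOpen_O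
  have hOu : UniqueDiffOn ℝ (O n) := hO.uniqueDiffOn
  have hsub : Metric.sphere (0 : E n) 1 ⊆ O n := by
    intro y hy
    simp only [Metric.mem_sphere, dist_zero_right] at hy
    simp [O, ← norm_pos_iff, hy]
  have hcont : ContinuousOn (iteratedFDerivWithin ℝ i f (O n)) (O n) :=
    hf.continuousOn_iteratedFDerivWithin (by exact_mod_cast le_top) hOu
  obtain ⟨B₀, hB₀⟩ := (isCompact_sphere (0 : E n) 1).exists_bound_of_continuousOn
    (hcont.mono hsub)
  refine ⟨max B₀ 0 + 1, by positivity, fun ξ hξ => ?_⟩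
  set c : ℝ := ‖ξ‖ with hc
  have hc0 : 0 < c := lt_of_lt_of_le one_pos hξ
  have hcne : c ≠ 0 := ne_of_gt hc0
  have hξO : ξ ∈ O n := by simp [O, ← norm_pos_iff]; positivity
  set x : E n := c⁻¹ • ξ with hxdef
  have hxs : x ∈ Metric.sphere (0 : E n) 1 := by
    simp only [Metric.mem_sphere, dist_zero_right, hxdef, norm_smul, norm_inv, norm_norm,
      Real.norm_eq_abs, abs_of_pos hc0]
    rw [← hc]; field_simp
  have hxO : x ∈ O n := hsub hxs
  -- the equiv L = scaling by c⁻¹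
  set L : E n ≃L[ℝ] E n := scl c⁻¹ (inv_ne_zero hcne) with hL
  set g : E n → X := fun y => f (c • y) with hg
  have hgL : g ∘ L = f := by
    funext y
    show f (c • (c⁻¹ • y)) = f y
    rw [smul_smul, mul_inv_cancel₀ hcne, one_smul]
  have hpre : (L : E n → E n) ⁻¹' (O n) = O n := by
    ext y
    simp [O, hL, scl_apply, smul_eq_zero, inv_ne_zero hcne]
  have hLξ : L ξ = x := by rw [hL, scl_apply]
  have key := L.iteratedFDerivWithin_comp_right g hOu (by rw [hLξ]; exact hxO) i
  rw [hgL, hpre, hLξ] at key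
  -- identify iteratedFDerivWithin of g with c^d • that of f
  have hgeq : EqOn g ((c ^ d) • f) (O n) := fun y _ => by
    simp only [hg, Pi.smul_apply]; exact hd c hc0 y
  have hgx : iteratedFDerivWithin ℝ i g (O n) x
      = (c ^ d) • iteratedFDerivWithin ℝ i f (O n) x := by
    rw [iteratedFDerivWithin_congr hgeq hxO i,
      iteratedFDerivWithin_const_smul_apply ((hf.of_le (by exact_mod_cast le_top)) x hxO) hOu hxO]
  have hLn : ‖(L : E n →L[ℝ] E n)‖ ≤ c⁻¹ := by
    refine ContinuousLinearMap.opNorm_le_bound _ (by positivity) fun y => ?_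
    have : (L : E n →L[ℝ] E n) y = c⁻¹ • y := rfl
    rw [this, norm_smul, Real.norm_eq_abs, abs_of_pos (by positivity)]
  have hnorm : ‖iteratedFDerivWithin ℝ i f (O n) ξ‖
      ≤ ‖iteratedFDerivWithin ℝ i g (O n) x‖ * (c⁻¹) ^ i := by
    rw [key]
    refine le_trans (ContinuousMultilinearMap.norm_compContinuousLinearMap_le _ _) ?_
    refine mul_le_mul_of_nonneg_left ?_ (norm_nonneg _)
    calc ∏ _j : Fin i, ‖(L : E n →L[ℝ] E n)‖ ≤ ∏ _j : Fin i, c⁻¹ :=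
          Finset.prod_le_prod (fun _ _ => norm_nonneg _) fun _ _ => hLn
      _ = (c⁻¹) ^ i := by simp [Finset.prod_const]
  have hfx : ‖iteratedFDerivWithin ℝ i f (O n) x‖ ≤ B₀ := hB₀ x hxs
  have hgn : ‖iteratedFDerivWithin ℝ i g (O n) x‖ ≤ c ^ d * B₀ := by
    rw [hgx, norm_smul, Real.norm_eq_abs, abs_of_pos (Real.rpow_pos_of_pos hc0 d)]
    exact mul_le_mul_of_nonneg_left hfx (Real.rpow_pos_of_pos hc0 d).le
  have hmain : ‖iteratedFDerivWithin ℝ i f (O n) ξ‖ ≤ (c ^ d * B₀) * (c⁻¹) ^ i :=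
    hnorm.trans (mul_le_mul_of_nonneg_right hgn (by positivity))
  have hip : ((c⁻¹ : ℝ)) ^ i = c ^ (-(i : ℝ)) := by
    rw [Real.rpow_neg hc0.le, Real.rpow_natCast, inv_pow]
  have hcd : (c ^ d * B₀) * (c⁻¹) ^ i ≤ (max B₀ 0 + 1) * c ^ (d - (i : ℝ)) := by
    rw [hip, mul_comm (c ^ d) B₀, mul_assoc, ← Real.rpow_add hc0, ← sub_eq_add_neg]
    have h2 : (0:ℝ) ≤ c ^ (d - (i : ℝ)) := (Real.rpow_pos_of_pos hc0 _).le
    refine mul_le_mul_of_nonneg_right ?_ h2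
    calc B₀ ≤ max B₀ 0 := le_max_left _ _
      _ ≤ max B₀ 0 + 1 := by linarith
  rw [← iteratedFDerivWithin_of_isOpen i hO hξO]
  exact hmain.trans hcd


variable (p : MvPolynomial (Fin n) ℝ) (m : ℕ)

def Pm : E n → ℝ := fun ξ => polyEval (MvPolynomial.homogeneousComponent m p) ξ

def Ff : ℝ × E n → ℝ := fun z =>
  ∑ j ∈ Finset.range (m + 1), z.1 ^ (m - j) * polyEval (MvPolynomial.homogeneousComponent j p) z.2

def Gf : ℝ × E n → ℝ := fun z =>
  ∑ j ∈ Finset.range m, z.1 ^ (m - 1 - j) * polyEval (MvPolynomial.homogeneousComponent j p) z.2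

def Hf : ℝ × E n → ℝ := fun z => Gf p m z / (Real.sqrt (Ff p m z) + Real.sqrt (Pm p m z.2))

def U : Set (ℝ × E n) := {z | 0 < Ff p m z ∧ 0 < Pm p m z.2}

def Phi : E n → ℝ × E n := fun ξ => (‖ξ‖⁻¹, ‖ξ‖⁻¹ • ξ)

def S (n : ℕ) : Set (E n) := {ξ | 1 < ‖ξ‖}

variable {p m}

lemma decomp (hdeg : p.totalDegree = m) (ξ : E n) :
    polyEval p ξ = ∑ j ∈ Finset.range (m + 1),
      polyEval (MvPolynomial.homogeneousComponent j p) ξ := by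
  conv_lhs => rw [polyEval, ← MvPolynomial.sum_homogeneousComponent p]
  rw [map_sum, hdeg]
  rfl

lemma Ff_scale (hdeg : p.totalDegree = m) {t : ℝ} (ht : 0 < t) (ξ : E n) :
    Ff p m (t, t • ξ) = t ^ m * polyEval p ξ := by
  rw [Ff, decomp hdeg ξ, Finset.mul_sum]
  refine Finset.sum_congr rfl fun j hj => ?_
  have hjm : j ≤ m := Finset.mem_range_succ_iff.mp hj
  rw [eval_smul_homog (MvPolynomial.homogeneousComponent_isHomogeneous j p) t ξ]
  rw [← mul_assoc, ← pow_add, Nat.sub_add_cancel hjm]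

lemma Ff_zero (hm : 1 ≤ m) (ω : E n) : Ff p m (0, ω) = Pm p m ω := by
  rw [Ff, Finset.sum_range_succ]
  have h1 : ∀ j ∈ Finset.range m,
      (0:ℝ) ^ (m - j) * polyEval (MvPolynomial.homogeneousComponent j p) ω = 0 := by
    intro j hj
    have : m - j ≠ 0 := Nat.sub_ne_zero_of_lt (Finset.mem_range.mp hj)
    rw [zero_pow this, zero_mul]
  rw [Finset.sum_congr rfl h1, Finset.sum_const_zero, zero_add, Nat.sub_self, pow_zero, one_mul]
  rfl

lemma Gf_scale (hdeg : p.totalDegree = m) (hm : 1 ≤ m) {t : ℝ} (ht : 0 < t) (ξ : E n) :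
    Gf p m (t, t • ξ) = t ^ (m - 1) * (polyEval p ξ - Pm p m ξ) := by
  have hsum : (∑ j ∈ Finset.range m, polyEval (MvPolynomial.homogeneousComponent j p) ξ)
      = polyEval p ξ - Pm p m ξ := by
    have := decomp hdeg ξ
    rw [Finset.sum_range_succ] at this
    rw [this]; simp only [Pm]; ring
  rw [Gf, ← hsum, Finset.mul_sum]
  refine Finset.sum_congr rfl fun j hj => ?_
  have hjm : j ≤ m - 1 := Nat.le_sub_one_of_lt (Finset.mem_range.mp hj)
  rw [eval_smul_homog (MvPolynomial.homogeneousComponent_isHomogeneous j p) t ξ]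
  rw [← mul_assoc, ← pow_add, Nat.sub_add_cancel hjm]

lemma Pm_scale (t : ℝ) (ξ : E n) : Pm p m (t • ξ) = t ^ m * Pm p m ξ :=
  eval_smul_homog (MvPolynomial.homogeneousComponent_isHomogeneous m p) t ξ

lemma Ff_contDiff : ContDiff ℝ (⊤ : ℕ∞) (Ff p m) := by
  refine ContDiff.sum fun j _ => ?_
  exact (contDiff_fst.pow _).mul ((contDiff_polyEval _).comp contDiff_snd)

lemma Gf_contDiff : ContDiff ℝ (⊤ : ℕ∞) (Gf p m) := by
  refine ContDiff.sum fun j _ => ?_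
  exact (contDiff_fst.pow _).mul ((contDiff_polyEval _).comp contDiff_snd)

lemma U_open : IsOpen (U p m) := by
  have h1 : IsOpen {z : ℝ × E n | 0 < Ff p m z} :=
    isOpen_lt continuous_const (Ff_contDiff (p := p) (m := m)).continuous
  have h2 : IsOpen {z : ℝ × E n | 0 < Pm p m z.2} :=
    isOpen_lt continuous_const (((contDiff_polyEval _).continuous).comp continuous_snd)
  exact h1.inter h2

lemma Hf_contDiffOn : ContDiffOn ℝ (⊤ : ℕ∞) (Hf p m) (U p m) := by
  have hden : ContDiffOn ℝ (⊤ : ℕ∞)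
      (fun z : ℝ × E n => Real.sqrt (Ff p m z) + Real.sqrt (Pm p m z.2)) (U p m) := by
    intro z hz
    have h1 : ContDiffAt ℝ (⊤ : ℕ∞) (fun z : ℝ × E n => Real.sqrt (Ff p m z)) z :=
      (contDiffAt_sqrt (ne_of_gt hz.1)).comp z (Ff_contDiff (p := p) (m := m)).contDiffAt
    have h2 : ContDiffAt ℝ (⊤ : ℕ∞) (fun z : ℝ × E n => Real.sqrt (Pm p m z.2)) z :=
      (contDiffAt_sqrt (ne_of_gt hz.2)).comp z
        (((contDiff_polyEval _).comp contDiff_snd).contDiffAt)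
    exact (h1.add h2).contDiffWithinAt
  refine ContDiffOn.div ((Gf_contDiff (p := p) (m := m)).contDiffOn) hden fun z hz => ?_
  have := Real.sqrt_pos.mpr hz.1
  have := Real.sqrt_nonneg (Pm p m z.2)
  positivity

lemma S_open : IsOpen (S n) := isOpen_lt continuous_const continuous_norm

lemma mem_S_ne_zero {ξ : E n} (hξ : ξ ∈ S n) : ξ ≠ 0 := by
  intro h
  rw [h] at hξ
  simp only [S, mem_setOf_eq, norm_zero] at hξ
  linarith

lemma Phi_contDiffOn : ContDiffOn ℝ (⊤ : ℕ∞) (Phi (n := n)) (S n) := by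
  intro ξ hξ
  have hne : ξ ≠ 0 := mem_S_ne_zero hξ
  have hn0 : ‖ξ‖ ≠ 0 := norm_ne_zero_iff.mpr hne
  have h1 : ContDiffAt ℝ (⊤ : ℕ∞) (fun y : E n => ‖y‖⁻¹) ξ :=
    (contDiffAt_norm ℝ hne).inv hn0
  exact (h1.prodMk (h1.smul contDiffAt_id)).contDiffWithinAt

lemma Phi_one : ∀ ξ : E n, ξ ≠ 0 → ‖(Phi ξ).2‖ = 1 := by
  intro ξ hξ
  simp only [Phi, norm_smul, norm_inv, norm_norm]
  exact inv_mul_cancel₀ (norm_ne_zero_iff.mpr hξ)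

lemma Phi_mapsTo (hdeg : p.totalDegree = m)
    (hpos : ∀ ξ : E n, 0 < polyEval p ξ)
    (hell : ∀ ξ : E n, ξ ≠ 0 → 0 < Pm p m ξ) :
    MapsTo (Phi (n := n)) (S n) (U p m) := by
  intro ξ hξ
  have hne : ξ ≠ 0 := mem_S_ne_zero hξ
  have ht : (0:ℝ) < ‖ξ‖⁻¹ := by
    have : (0:ℝ) < ‖ξ‖ := norm_pos_iff.mpr hne
    positivity
  constructor
  · show 0 < Ff p m (‖ξ‖⁻¹, ‖ξ‖⁻¹ • ξ)
    rw [Ff_scale hdeg ht ξ]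
    exact mul_pos (pow_pos ht m) (hpos ξ)
  · show 0 < Pm p m (‖ξ‖⁻¹ • ξ)
    rw [Pm_scale]
    exact mul_pos (pow_pos ht m) (hell ξ hne)

lemma Phi_mem_K {ξ : E n} (hξ : ξ ∈ S n) :
    Phi ξ ∈ (Icc (0:ℝ) 1) ×ˢ Metric.sphere (0 : E n) 1 := by
  have hne : ξ ≠ 0 := mem_S_ne_zero hξ
  have h1 : (1:ℝ) < ‖ξ‖ := hξ
  constructor
  · constructor
    · show (0:ℝ) ≤ ‖ξ‖⁻¹
      positivity
    · show ‖ξ‖⁻¹ ≤ 1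
      rw [inv_le_one_iff₀]
      right; linarith
  · show (Phi ξ).2 ∈ Metric.sphere (0 : E n) 1
    simp only [Metric.mem_sphere, dist_zero_right]
    exact Phi_one ξ hne

lemma K_subset_U (hdeg : p.totalDegree = m) (hm : 1 ≤ m)
    (hpos : ∀ ξ : E n, 0 < polyEval p ξ)
    (hell : ∀ ξ : E n, ξ ≠ 0 → 0 < Pm p m ξ) :
    (Icc (0:ℝ) 1) ×ˢ Metric.sphere (0 : E n) 1 ⊆ U p m := by
  rintro ⟨t, ω⟩ ⟨⟨ht0, ht1⟩, hω⟩
  simp only [Metric.mem_sphere, dist_zero_right] at hω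
  dsimp only at ht0 ht1
  have hωne : ω ≠ 0 := by
    intro h; rw [h] at hω; simp at hω
  constructor
  · show 0 < Ff p m (t, ω)
    rcases eq_or_lt_of_le ht0 with h | h
    · rw [← h, Ff_zero hm ω]
      exact hell ω hωne
    · have hω' : ω = t • (t⁻¹ • ω) := by
        rw [smul_smul, mul_inv_cancel₀ (ne_of_gt h), one_smul]
      rw [show (t, ω) = (t, t • (t⁻¹ • ω)) by rw [← hω'], Ff_scale hdeg h]
      exact mul_pos (pow_pos h m) (hpos _)
  · exact hell ω hωne

lemma key_identity (hdeg : p.totalDegree = m) {h : ℕ} (hmh : m = h + h) (hh : 1 ≤ h)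
    (hpos : ∀ ξ : E n, 0 < polyEval p ξ)
    (hell : ∀ ξ : E n, ξ ≠ 0 → 0 < Pm p m ξ)
    {ξ : E n} (hξ : ξ ≠ 0) :
    Real.sqrt (polyEval p ξ) - Real.sqrt (Pm p m ξ)
      = ‖ξ‖ ^ (h - 1) * Hf p m (Phi ξ) := by
  have hm1 : 1 ≤ m := by omega
  have hnorm : (0:ℝ) < ‖ξ‖ := norm_pos_iff.mpr hξ
  set t : ℝ := ‖ξ‖⁻¹ with htdef
  have ht : 0 < t := by positivity
  set A := Real.sqrt (polyEval p ξ) with hA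
  set B := Real.sqrt (Pm p m ξ) with hB
  have hA0 : 0 < A := Real.sqrt_pos.mpr (hpos ξ)
  have hB0 : 0 ≤ B := Real.sqrt_nonneg _
  have hAB : 0 < A + B := by linarith
  have hsq : ∀ x : ℝ, Real.sqrt (t ^ m * x) = t ^ h * Real.sqrt x := by
    intro x
    rw [show t ^ m = (t ^ h) ^ 2 by rw [← pow_mul, hmh]; ring_nf,
      Real.sqrt_mul (sq_nonneg _) x, Real.sqrt_sq (by positivity)]
  have hfac : polyEval p ξ - Pm p m ξ = (A - B) * (A + B) := by
    have h1 : A ^ 2 = polyEval p ξ := Real.sq_sqrt (hpos ξ).le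
    have h2 : B ^ 2 = Pm p m ξ := Real.sq_sqrt (hell ξ hξ).le
    rw [← h1, ← h2]; ring
  have hHf : Hf p m (Phi ξ) = t ^ (m - 1) * ((A - B) * (A + B)) / (t ^ h * (A + B)) := by
    show Hf p m (t, t • ξ) = _
    rw [Hf]
    simp only
    rw [Gf_scale hdeg hm1 ht ξ, Ff_scale hdeg ht ξ, Pm_scale, hsq, hsq, hfac]
    rw [← mul_add]
  rw [hHf]
  have hm1h : m - 1 = (h - 1) + h := by omega
  rw [hm1h, pow_add]
  have htne : t ≠ 0 := ne_of_gt ht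
  have hABne : A + B ≠ 0 := ne_of_gt hAB
  have hcancel : t ^ (h-1) * t ^ h * ((A - B) * (A + B)) / (t ^ h * (A + B))
      = t ^ (h-1) * (A - B) := by
    field_simp
  rw [hcancel, ← mul_assoc, ← mul_pow, mul_inv_cancel₀ (ne_of_gt hnorm), one_pow, one_mul]

lemma bound_u (dd : ℕ) (i : ℕ) : ∃ B : ℝ, 0 < B ∧ ∀ ξ : E n, 1 ≤ ‖ξ‖ →
    ‖iteratedFDeriv ℝ i (fun y : E n => ‖y‖ ^ dd) ξ‖ ≤ B * ‖ξ‖ ^ ((dd : ℝ) - i) := by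
  refine homog_bound _ ?_ (dd : ℝ) ?_ i
  · intro y hy
    exact ((contDiffAt_norm ℝ hy).pow dd).contDiffWithinAt
  · intro c hc y
    simp only [smul_eq_mul]
    rw [norm_smul, Real.norm_eq_abs, abs_of_pos hc, mul_pow, Real.rpow_natCast]

lemma bound_phi1 (i : ℕ) : ∃ B : ℝ, 0 < B ∧ ∀ ξ : E n, 1 ≤ ‖ξ‖ →
    ‖iteratedFDeriv ℝ i (fun y : E n => ‖y‖⁻¹) ξ‖ ≤ B * ‖ξ‖ ^ ((-1 : ℝ) - i) := by
  refine homog_bound _ ?_ (-1 : ℝ) ?_ i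
  · intro y hy
    exact ((contDiffAt_norm ℝ hy).inv (norm_ne_zero_iff.mpr hy)).contDiffWithinAt
  · intro c hc y
    simp only [smul_eq_mul]
    rw [norm_smul, Real.norm_eq_abs, abs_of_pos hc, mul_inv, Real.rpow_neg_one]

lemma bound_phi2 (i : ℕ) : ∃ B : ℝ, 0 < B ∧ ∀ ξ : E n, 1 ≤ ‖ξ‖ →
    ‖iteratedFDeriv ℝ i (fun y : E n => ‖y‖⁻¹ • y) ξ‖ ≤ B * ‖ξ‖ ^ ((0 : ℝ) - i) := by
  refine homog_bound _ ?_ (0 : ℝ) ?_ i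
  · intro y hy
    exact (((contDiffAt_norm ℝ hy).inv (norm_ne_zero_iff.mpr hy)).smul
      contDiffAt_id).contDiffWithinAt
  · intro c hc y
    rw [Real.rpow_zero, one_smul, norm_smul, Real.norm_eq_abs, abs_of_pos hc, mul_inv,
      smul_smul]
    have : c⁻¹ * ‖y‖⁻¹ * c = ‖y‖⁻¹ := by
      rw [mul_comm, ← mul_assoc, mul_inv_cancel₀ (ne_of_gt hc), one_mul]
    rw [this]

lemma bound_Phi (i : ℕ) : ∃ B : ℝ, 0 < B ∧ ∀ ξ : E n, ξ ∈ S n →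
    ‖iteratedFDerivWithin ℝ i (Phi (n := n)) (S n) ξ‖ ≤ B * ‖ξ‖ ^ (-(i : ℝ)) := by
  obtain ⟨B1, hB1p, hB1⟩ := bound_phi1 (n := n) i
  obtain ⟨B2, hB2p, hB2⟩ := bound_phi2 (n := n) i
  set Φ1 : E n → ℝ := fun y => ‖y‖⁻¹ with hΦ1def
  set Φ2 : E n → E n := fun y => ‖y‖⁻¹ • y with hΦ2def
  set f1 : E n → ℝ × E n := (ContinuousLinearMap.inl ℝ ℝ (E n)) ∘ Φ1 with hf1def
  set f2 : E n → ℝ × E n := (ContinuousLinearMap.inr ℝ ℝ (E n)) ∘ Φ2 with hf2def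
  have hΦ1 : ContDiffOn ℝ (⊤ : ℕ∞) Φ1 (S n) := fun y hy =>
    ((contDiffAt_norm ℝ (mem_S_ne_zero hy)).inv
      (norm_ne_zero_iff.mpr (mem_S_ne_zero hy))).contDiffWithinAt
  have hΦ2 : ContDiffOn ℝ (⊤ : ℕ∞) Φ2 (S n) := fun y hy =>
    (((contDiffAt_norm ℝ (mem_S_ne_zero hy)).inv
      (norm_ne_zero_iff.mpr (mem_S_ne_zero hy))).smul contDiffAt_id).contDiffWithinAt
  have hf1 : ContDiffOn ℝ (⊤ : ℕ∞) f1 (S n) :=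
    (ContinuousLinearMap.inl ℝ ℝ (E n)).contDiff.comp_contDiffOn hΦ1
  have hf2 : ContDiffOn ℝ (⊤ : ℕ∞) f2 (S n) :=
    (ContinuousLinearMap.inr ℝ ℝ (E n)).contDiff.comp_contDiffOn hΦ2
  have hPeq : EqOn (Phi (n := n)) (f1 + f2) (S n) := by
    intro ξ _
    simp only [Phi, Pi.add_apply, hf1def, hf2def, Function.comp_apply,
      ContinuousLinearMap.inl_apply, ContinuousLinearMap.inr_apply, Prod.mk_add_mk,
      add_zero, zero_add]
    rfl
  have hSu : UniqueDiffOn ℝ (S n) := S_open.uniqueDiffOn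
  refine ⟨B1 + B2, by positivity, fun ξ hξ => ?_⟩
  have hξ1 : 1 ≤ ‖ξ‖ := le_of_lt hξ
  have hik : (i : WithTop ℕ∞) ≤ (⊤ : ℕ∞) := by exact_mod_cast le_top
  rw [iteratedFDerivWithin_congr hPeq hξ i,
    iteratedFDerivWithin_add_apply ((hf1.of_le hik) ξ hξ) ((hf2.of_le hik) ξ hξ) hSu hξ]
  refine le_trans (norm_add_le _ _) ?_
  have hinl : ‖(ContinuousLinearMap.inl ℝ ℝ (E n))‖ ≤ 1 := by
    refine ContinuousLinearMap.opNorm_le_bound _ zero_le_one fun x => ?_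
    simp [Prod.norm_def]
  have hinr : ‖(ContinuousLinearMap.inr ℝ ℝ (E n))‖ ≤ 1 := by
    refine ContinuousLinearMap.opNorm_le_bound _ zero_le_one fun x => ?_
    simp [Prod.norm_def]
  have h1 : ‖iteratedFDerivWithin ℝ i f1 (S n) ξ‖ ≤ B1 * ‖ξ‖ ^ (-(i : ℝ)) := by
    rw [hf1def, (ContinuousLinearMap.inl ℝ ℝ (E n)).iteratedFDerivWithin_comp_left (hΦ1 ξ hξ) hSu hξ hik]
    refine le_trans (ContinuousLinearMap.norm_compContinuousMultilinearMap_le _ _) ?_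
    have := hB1 ξ hξ1
    rw [iteratedFDerivWithin_of_isOpen i S_open hξ]
    calc ‖(ContinuousLinearMap.inl ℝ ℝ (E n))‖ * ‖iteratedFDeriv ℝ i Φ1 ξ‖
        ≤ 1 * (B1 * ‖ξ‖ ^ ((-1 : ℝ) - i)) := by
          exact mul_le_mul hinl this (norm_nonneg _) zero_le_one
      _ = B1 * ‖ξ‖ ^ ((-1 : ℝ) - i) := one_mul _
      _ ≤ B1 * ‖ξ‖ ^ (-(i : ℝ)) := by
          refine mul_le_mul_of_nonneg_left ?_ hB1p.le
          exact Real.rpow_le_rpow_of_exponent_le hξ1 (by linarith)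
  have h2 : ‖iteratedFDerivWithin ℝ i f2 (S n) ξ‖ ≤ B2 * ‖ξ‖ ^ (-(i : ℝ)) := by
    rw [hf2def, (ContinuousLinearMap.inr ℝ ℝ (E n)).iteratedFDerivWithin_comp_left (hΦ2 ξ hξ) hSu hξ hik]
    refine le_trans (ContinuousLinearMap.norm_compContinuousMultilinearMap_le _ _) ?_
    have := hB2 ξ hξ1
    rw [iteratedFDerivWithin_of_isOpen i S_open hξ]
    calc ‖(ContinuousLinearMap.inr ℝ ℝ (E n))‖ * ‖iteratedFDeriv ℝ i Φ2 ξ‖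
        ≤ 1 * (B2 * ‖ξ‖ ^ ((0 : ℝ) - i)) := by
          exact mul_le_mul hinr this (norm_nonneg _) zero_le_one
      _ = B2 * ‖ξ‖ ^ ((0 : ℝ) - i) := one_mul _
      _ = B2 * ‖ξ‖ ^ (-(i : ℝ)) := by rw [zero_sub]
  calc ‖iteratedFDerivWithin ℝ i f1 (S n) ξ‖ + ‖iteratedFDerivWithin ℝ i f2 (S n) ξ‖
      ≤ B1 * ‖ξ‖ ^ (-(i : ℝ)) + B2 * ‖ξ‖ ^ (-(i : ℝ)) := add_le_add h1 h2
    _ = (B1 + B2) * ‖ξ‖ ^ (-(i : ℝ)) := by ring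

end SqrtAux

open Set SqrtAux

/-- The function `a(ξ) = P(ξ)^{1/2} - P_m(ξ)^{1/2}` is a symbol of order `m/2 - 1` at
infinity: each `k`-th derivative is bounded by `C |ξ|^{m/2 - 1 - k}` for large `|ξ|`. -/
theorem sqrt_diff_symbol_estimate (n m : ℕ) (hn : 2 ≤ n) (hm4 : 4 ≤ m) (hmeven : Even m)
    (p : MvPolynomial (Fin n) ℝ) (hdeg : p.totalDegree = m)
    (hpos : ∀ ξ : EuclideanSpace ℝ (Fin n), 0 < polyEval p ξ)
    (hell : ∀ ξ : EuclideanSpace ℝ (Fin n), ξ ≠ 0 →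
        0 < polyEval (MvPolynomial.homogeneousComponent m p) ξ) :
    ∀ k : ℕ, ∃ C : ℝ, 0 < C ∧ ∃ R : ℝ, 1 ≤ R ∧
      ∀ ξ : EuclideanSpace ℝ (Fin n), R ≤ ‖ξ‖ →
        ‖iteratedFDeriv ℝ k
            (fun ξ' => Real.sqrt (polyEval p ξ') -
              Real.sqrt (polyEval (MvPolynomial.homogeneousComponent m p) ξ')) ξ‖
          ≤ C * ‖ξ‖ ^ ((m : ℝ) / 2 - 1 - k) := by
  intro k
  classical
  obtain ⟨h, hmh⟩ := hmeven
  have hh2 : 2 ≤ h := by omega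
  have hm1 : 1 ≤ m := by omega
  have hell' : ∀ ξ : E n, ξ ≠ 0 → 0 < Pm p m ξ := hell
  -- bounds for the weight u(y) = ‖y‖^(h-1)
  choose Bu hBup hBu using fun i => bound_u (n := n) (h - 1) i
  -- bounds for Phi
  choose BP hBPp hBP using fun i => bound_Phi (n := n) i
  set Bmax : ℝ := 1 + ∑ i ∈ Finset.range (k + 1), max (BP i) 0 with hBmaxdef
  have hBmax1 : (1 : ℝ) ≤ Bmax := by
    have : (0:ℝ) ≤ ∑ i ∈ Finset.range (k + 1), max (BP i) 0 :=
      Finset.sum_nonneg fun i _ => le_max_right _ _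
    simp only [hBmaxdef]; linarith
  have hBmax0 : (0 : ℝ) < Bmax := lt_of_lt_of_le one_pos hBmax1
  have hBmaxi : ∀ i ≤ k, BP i ≤ Bmax := by
    intro i hik
    have h1 : BP i ≤ max (BP i) 0 := le_max_left _ _
    have h2 : max (BP i) 0 ≤ ∑ j ∈ Finset.range (k + 1), max (BP j) 0 :=
      Finset.single_le_sum (fun j _ => le_max_right (BP j) 0)
        (Finset.mem_range.mpr (by omega))
    simp only [hBmaxdef]; linarith
  -- bounds for the derivatives of H on the compact set K
  set K : Set (ℝ × E n) := (Icc (0:ℝ) 1) ×ˢ Metric.sphere (0 : E n) 1 with hKdef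
  have hKU : K ⊆ U p m := K_subset_U hdeg hm1 hpos hell'
  have hKc : IsCompact K := isCompact_Icc.prod (isCompact_sphere _ _)
  have hHsm := Hf_contDiffOn (p := p) (m := m)
  have hCH' : ∀ i : ℕ, ∃ Ci : ℝ, ∀ z ∈ K,
      ‖iteratedFDerivWithin ℝ i (Hf p m) (U p m) z‖ ≤ Ci := by
    intro i
    have hconti : ContinuousOn (iteratedFDerivWithin ℝ i (Hf p m) (U p m)) (U p m) :=
      hHsm.continuousOn_iteratedFDerivWithin (by exact_mod_cast le_top)
        (U_open (p := p) (m := m)).uniqueDiffOn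
    exact hKc.exists_bound_of_continuousOn (hconti.mono hKU)
  choose CH hCH using hCH'
  set C : ℝ := (∑ i ∈ Finset.range (k + 1), max (CH i) 0) + 1 with hCdef
  have hCpos : 0 < C := by
    have : (0:ℝ) ≤ ∑ i ∈ Finset.range (k + 1), max (CH i) 0 :=
      Finset.sum_nonneg fun i _ => le_max_right _ _
    simp only [hCdef]; linarith
  have hCle : ∀ i ≤ k, CH i ≤ C := by
    intro i hik
    have h1 : CH i ≤ max (CH i) 0 := le_max_left _ _
    have h2 : max (CH i) 0 ≤ ∑ j ∈ Finset.range (k + 1), max (CH j) 0 :=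
      Finset.single_le_sum (fun j _ => le_max_right (CH j) 0)
        (Finset.mem_range.mpr (by omega))
    simp only [hCdef]; linarith
  -- bound for the derivatives of v = H ∘ Phi on S
  have hv : ∀ j, j ≤ k → ∀ ξ : E n, ξ ∈ S n →
      ‖iteratedFDerivWithin ℝ j (Hf p m ∘ Phi) (S n) ξ‖
        ≤ ((j.factorial : ℝ) * C * Bmax ^ j) * ‖ξ‖ ^ (-(j : ℝ)) := by
    intro j hjk ξ hξ
    have hξ1 : (1:ℝ) ≤ ‖ξ‖ := le_of_lt hξ
    have hnp : (0:ℝ) < ‖ξ‖ := lt_of_lt_of_le one_pos hξ1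
    have hpow : ∀ i : ℕ, ‖ξ‖ ^ (-(i : ℝ)) = (‖ξ‖⁻¹) ^ i := by
      intro i
      rw [Real.rpow_neg hnp.le, Real.rpow_natCast, inv_pow]
    have happ := norm_iteratedFDerivWithin_comp_le (𝕜 := ℝ) (g := Hf p m) (f := Phi)
      (n := j) (s := S n) (t := U p m) (N := (⊤ : ℕ∞)) hHsm Phi_contDiffOn
      (by exact_mod_cast le_top) (U_open (p := p) (m := m)).uniqueDiffOn S_open.uniqueDiffOn
      (Phi_mapsTo hdeg hpos hell') hξ (C := C) (D := Bmax * ‖ξ‖⁻¹)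
      (fun i hij => le_trans (hCH i (Phi ξ) (Phi_mem_K hξ)) (hCle i (le_trans hij hjk)))
      (fun i hi1 hij => by
        refine le_trans (hBP i ξ hξ) ?_
        rw [hpow i, mul_pow]
        refine mul_le_mul_of_nonneg_right ?_ (by positivity)
        exact le_trans (hBmaxi i (le_trans hij hjk)) (le_self_pow₀ hBmax1 (by omega)))
    refine le_trans happ ?_
    rw [mul_pow, hpow j]
    calc (j.factorial : ℝ) * C * (Bmax ^ j * (‖ξ‖⁻¹) ^ j)
        = ((j.factorial : ℝ) * C * Bmax ^ j) * (‖ξ‖⁻¹) ^ j := by ring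
      _ ≤ ((j.factorial : ℝ) * C * Bmax ^ j) * (‖ξ‖⁻¹) ^ j := le_refl _
  -- bound for the derivatives of u on S
  have hu : ∀ i, i ≤ k → ∀ ξ : E n, ξ ∈ S n →
      ‖iteratedFDerivWithin ℝ i (fun y : E n => ‖y‖ ^ (h - 1)) (S n) ξ‖
        ≤ Bu i * ‖ξ‖ ^ (((h - 1 : ℕ) : ℝ) - i) := by
    intro i _ ξ hξ
    rw [iteratedFDerivWithin_of_isOpen i S_open hξ]
    exact hBu i ξ (le_of_lt hξ)
  -- smoothness
  have husm : ContDiffOn ℝ (⊤ : ℕ∞) (fun y : E n => ‖y‖ ^ (h - 1)) (S n) := fun y hy =>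
    ((contDiffAt_norm ℝ (mem_S_ne_zero hy)).pow _).contDiffWithinAt
  have hvsm : ContDiffOn ℝ (⊤ : ℕ∞) (Hf p m ∘ Phi) (S n) :=
    hHsm.comp Phi_contDiffOn (Phi_mapsTo hdeg hpos hell')
  -- the total constant
  set Ctot : ℝ := (∑ i ∈ Finset.range (k + 1),
      (k.choose i : ℝ) * Bu i * (((k - i).factorial : ℝ) * C * Bmax ^ (k - i))) + 1
    with hCtotdef
  have hCtotpos : 0 < Ctot := by
    have : (0:ℝ) ≤ ∑ i ∈ Finset.range (k + 1),
        (k.choose i : ℝ) * Bu i * (((k - i).factorial : ℝ) * C * Bmax ^ (k - i)) := by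
      refine Finset.sum_nonneg fun i _ => ?_
      have := hBup i
      positivity
    simp only [hCtotdef]; linarith
  refine ⟨Ctot, hCtotpos, 2, by norm_num, fun ξ hξR => ?_⟩
  have hξS : ξ ∈ S n := by show (1:ℝ) < ‖ξ‖; linarith
  have hξ1 : (1:ℝ) ≤ ‖ξ‖ := by linarith
  have hnp : (0:ℝ) < ‖ξ‖ := by linarith
  -- identify the function with u * v on S
  have heq : EqOn
      (fun ξ' : E n => Real.sqrt (polyEval p ξ') -
        Real.sqrt (polyEval (MvPolynomial.homogeneousComponent m p) ξ'))
      (fun ξ' : E n => ‖ξ'‖ ^ (h - 1) * (Hf p m ∘ Phi) ξ') (S n) := by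
    intro ξ' hξ'
    have := key_identity hdeg hmh (by omega) hpos hell' (mem_S_ne_zero hξ')
    simpa [Pm, Function.comp] using this
  rw [← iteratedFDerivWithin_of_isOpen k S_open hξS, iteratedFDerivWithin_congr heq hξS k]
  refine le_trans (norm_iteratedFDerivWithin_mul_le (𝕜 := ℝ)
    (A := ℝ) husm hvsm S_open.uniqueDiffOn hξS (by exact_mod_cast le_top)) ?_
  have hterm : ∀ i ∈ Finset.range (k + 1),
      (k.choose i : ℝ) *
          ‖iteratedFDerivWithin ℝ i (fun y : E n => ‖y‖ ^ (h - 1)) (S n) ξ‖ *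
          ‖iteratedFDerivWithin ℝ (k - i) (Hf p m ∘ Phi) (S n) ξ‖
        ≤ ((k.choose i : ℝ) * Bu i * (((k - i).factorial : ℝ) * C * Bmax ^ (k - i)))
            * ‖ξ‖ ^ (((h - 1 : ℕ) : ℝ) - k) := by
    intro i hi
    have hik : i ≤ k := Nat.lt_succ_iff.mp (Finset.mem_range.mp hi)
    have h1 := hu i hik ξ hξS
    have h2 := hv (k - i) (Nat.sub_le _ _) ξ hξS
    have hexp : ‖ξ‖ ^ (((h - 1 : ℕ) : ℝ) - i) * ‖ξ‖ ^ (-((k - i : ℕ) : ℝ))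
        = ‖ξ‖ ^ (((h - 1 : ℕ) : ℝ) - k) := by
      rw [← Real.rpow_add hnp]
      congr 1
      have : ((k - i : ℕ) : ℝ) = (k : ℝ) - i := by
        rw [Nat.cast_sub hik]
      rw [this]; ring
    calc (k.choose i : ℝ) *
          ‖iteratedFDerivWithin ℝ i (fun y : E n => ‖y‖ ^ (h - 1)) (S n) ξ‖ *
          ‖iteratedFDerivWithin ℝ (k - i) (Hf p m ∘ Phi) (S n) ξ‖
        ≤ (k.choose i : ℝ) * (Bu i * ‖ξ‖ ^ (((h - 1 : ℕ) : ℝ) - i)) *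
            ((((k - i).factorial : ℝ) * C * Bmax ^ (k - i)) * ‖ξ‖ ^ (-((k - i : ℕ) : ℝ))) := by
          refine mul_le_mul (mul_le_mul_of_nonneg_left h1 (by positivity)) h2
            (norm_nonneg _) ?_
          have hBui := hBup i
          positivity
      _ = ((k.choose i : ℝ) * Bu i * (((k - i).factorial : ℝ) * C * Bmax ^ (k - i)))
            * (‖ξ‖ ^ (((h - 1 : ℕ) : ℝ) - i) * ‖ξ‖ ^ (-((k - i : ℕ) : ℝ))) := by ring
      _ = _ := by rw [hexp]
  calc ∑ i ∈ Finset.range (k + 1), (k.choose i : ℝ) *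
          ‖iteratedFDerivWithin ℝ i (fun y : E n => ‖y‖ ^ (h - 1)) (S n) ξ‖ *
          ‖iteratedFDerivWithin ℝ (k - i) (Hf p m ∘ Phi) (S n) ξ‖
      ≤ ∑ i ∈ Finset.range (k + 1),
          ((k.choose i : ℝ) * Bu i * (((k - i).factorial : ℝ) * C * Bmax ^ (k - i)))
            * ‖ξ‖ ^ (((h - 1 : ℕ) : ℝ) - k) := Finset.sum_le_sum hterm
    _ = (∑ i ∈ Finset.range (k + 1),
          (k.choose i : ℝ) * Bu i * (((k - i).factorial : ℝ) * C * Bmax ^ (k - i)))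
            * ‖ξ‖ ^ (((h - 1 : ℕ) : ℝ) - k) := by rw [← Finset.sum_mul]
    _ ≤ Ctot * ‖ξ‖ ^ (((h - 1 : ℕ) : ℝ) - k) := by
        refine mul_le_mul_of_nonneg_right ?_ (Real.rpow_nonneg hnp.le _)
        simp only [hCtotdef]; linarith
    _ = Ctot * ‖ξ‖ ^ ((m : ℝ) / 2 - 1 - k) := by
        congr 1
        congr 1
        rw [Nat.cast_sub (by omega : 1 ≤ h), hmh]
        push_cast
        ring
end
end
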